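/- Let 0 < α ≠ 1 be a real number, ε ≥ 0, and let f : [0,1] → ℝ satisfy |f(x) + (1−x)^α·f(y/(1−x)) − f(y) − (1−y)^α·f(x/(1−y))| ≤ ε for all pairs (x,y) with x, y ∈ [0,1), x + y ≤ 1. Then there exist a, b ∈ ℝ such that |f(x) − (a·x^α + b·((1−x)^α − 1))| ≤ 7ε·|2^{1−α} − 1|^{−1} for all x ∈ [0,1]. -/

import Mathlib

set_option maxHeartbeats 1600000


/-- Maksa's stability theorem (the one-dimensional case `M x = x ^ α`, `0 < α ≠ 1`):
an `ε`-approximate solution of the fundamental equation of information of degree `α`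
is within `7ε·|2^(1-α) - 1|⁻¹` of an exact solution `a·x^α + b·((1-x)^α - 1)`.
Here `^` is the real power `Real.rpow`, so `0^α = 0` for `α > 0`. -/
theorem stmt_9 (α : ℝ) (hα : 0 < α) (hα1 : α ≠ 1) (ε : ℝ) (hε : 0 ≤ ε)
    (f : ℝ → ℝ)
    (hf : ∀ x y : ℝ, 0 ≤ x → x < 1 → 0 ≤ y → y < 1 → x + y ≤ 1 →
      |f x + (1 - x) ^ α * f (y / (1 - x)) - f y - (1 - y) ^ α * f (x / (1 - y))| ≤ ε) :
    ∃ a b : ℝ, ∀ x ∈ Set.Icc (0 : ℝ) 1,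
      |f x - (a * x ^ α + b * ((1 - x) ^ α - 1))| ≤ 7 * ε * |(2 : ℝ) ^ (1 - α) - 1|⁻¹ := by
  set κ : ℝ := (2 : ℝ) ^ (1 - α) - 1 with hκdef
  have h2pos : (0:ℝ) < (2:ℝ) ^ (1 - α) := Real.rpow_pos_of_pos two_pos _
  have hκlt : κ < 1 := by
    have : (2:ℝ) ^ (1 - α) < (2:ℝ) ^ (1:ℝ) := by
      apply (Real.rpow_lt_rpow_left_iff one_lt_two).mpr
      linarith
    rw [Real.rpow_one] at this
    simp only [hκdef]; linarith
  have hκgt : -1 < κ := by simp only [hκdef]; linarith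
  have hκne : κ ≠ 0 := by
    rcases hα1.lt_or_gt with h | h
    · -- α < 1, so 1 - α > 0, κ < 0? no: 2^(1-α) > 1
      have : (2:ℝ) ^ (0:ℝ) < (2:ℝ) ^ (1 - α) := by
        apply (Real.rpow_lt_rpow_left_iff one_lt_two).mpr
        linarith
      rw [Real.rpow_zero] at this
      simp only [hκdef]
      intro hc; nlinarith
    · have : (2:ℝ) ^ (1 - α) < (2:ℝ) ^ (0:ℝ) := by
        apply (Real.rpow_lt_rpow_left_iff one_lt_two).mpr
        linarith
      rw [Real.rpow_zero] at this
      simp only [hκdef]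
      intro hc; nlinarith
  have hκabs : (0:ℝ) < |κ| := abs_pos.mpr hκne
  have hκabs1 : |κ| ≤ 1 := by
    rw [abs_le]; constructor <;> linarith
  -- bound on |f 0|
  have hf0 : |f 0| ≤ 2 * ε := by
    set t : ℝ := 1 - (1/2 : ℝ) ^ (1/α) with htdef
    have hr0 : (0:ℝ) < (1/2 : ℝ) ^ (1/α) := Real.rpow_pos_of_pos (by norm_num) _
    have hr1 : (1/2 : ℝ) ^ (1/α) < 1 :=
      Real.rpow_lt_one (by norm_num) (by norm_num) (by positivity)
    have ht0 : 0 ≤ t := by simp only [htdef]; linarith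
    have ht1 : t < 1 := by simp only [htdef]; linarith
    have inst := hf t 0 ht0 ht1 le_rfl (by norm_num) (by linarith)
    rw [zero_div, show (1:ℝ) - 0 = 1 by norm_num, Real.one_rpow, div_one, one_mul] at inst
    rw [show f t + (1 - t) ^ α * f 0 - f 0 - f t = ((1 - t) ^ α - 1) * f 0 by ring] at inst
    rw [show 1 - t = (1/2 : ℝ) ^ (1/α) by simp only [htdef]; ring] at inst
    rw [← Real.rpow_mul (by norm_num : (0:ℝ) ≤ 1/2),
      show (1:ℝ)/α * α = 1 by field_simp, Real.rpow_one, abs_mul] at inst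
    have : |(1:ℝ)/2 - 1| = 1/2 := by norm_num
    rw [this] at inst
    linarith
  refine ⟨f 1 + (f (1/2) - f 1 * (1/2 : ℝ) ^ α) / κ,
    (f (1/2) - f 1 * (1/2 : ℝ) ^ α) / κ, ?_⟩
  intro x hx
  obtain ⟨hx0, hx1⟩ := hx
  rcases eq_or_lt_of_le hx0 with h0 | h0
  · -- x = 0
    rw [← h0]
    rw [Real.zero_rpow hα.ne', show (1:ℝ) - 0 = 1 by norm_num, Real.one_rpow]
    rw [show ∀ a b : ℝ, f 0 - (a * 0 + b * (1 - 1)) = f 0 by intro a b; ring]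
    rw [show 7 * ε * |κ|⁻¹ = 7 * ε / |κ| from (div_eq_mul_inv _ _).symm]
    rw [le_div_iff₀ hκabs]
    have h1 : |f 0| * |κ| ≤ (2 * ε) * 1 :=
      mul_le_mul hf0 hκabs1 (abs_nonneg _) (by positivity)
    linarith
  rcases eq_or_lt_of_le hx1 with h1 | h1
  · -- x = 1
    rw [h1]
    rw [show (1:ℝ) - 1 = 0 by norm_num, Real.zero_rpow hα.ne', Real.one_rpow]
    rw [show f 1 - ((f 1 + (f (1/2) - f 1 * (1/2 : ℝ) ^ α) / κ) * 1 +
        (f (1/2) - f 1 * (1/2 : ℝ) ^ α) / κ * (0 - 1)) = 0 by ring]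
    rw [abs_zero]
    positivity
  -- main case 0 < x < 1
  have hxne : x ≠ 0 := ne_of_gt h0
  have h1xpos : (0:ℝ) < 1 - x := by linarith
  have h1xne : (1:ℝ) - x ≠ 0 := ne_of_gt h1xpos
  have hs : (0:ℝ) < 2 - x := by linarith
  have hsne : (2:ℝ) - x ≠ 0 := ne_of_gt hs
  have hk2pos : (0:ℝ) < 1 - x/2 := by linarith
  have h22pos : (0:ℝ) < 2 - 2*x := by linarith
  have hune : (1:ℝ)/(2-x) ≠ 0 := one_div_ne_zero hsne
  have hvne : ((1:ℝ)-x)/(2-x) ≠ 0 := div_ne_zero h1xne hsne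
  have hwne : x/(2-x) ≠ 0 := div_ne_zero hxne hsne
  have hwpne : ((2:ℝ)-2*x)/(2-x) ≠ 0 := div_ne_zero (ne_of_gt h22pos) hsne
  have hunn : (0:ℝ) ≤ 1/(2-x) := div_nonneg (by norm_num) hs.le
  have hvnn : (0:ℝ) ≤ (1-x)/(2-x) := div_nonneg h1xpos.le hs.le
  have hwnn : (0:ℝ) ≤ x/(2-x) := div_nonneg h0.le hs.le
  have hwpnn : (0:ℝ) ≤ (2-2*x)/(2-x) := div_nonneg h22pos.le hs.le
  -- instance 1 : hf (x/2) (1/2)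
  have h1' := hf (x/2) (1/2) (by linarith) (by linarith) (by norm_num) (by norm_num)
    (by linarith)
  rw [show (1:ℝ)/2 / (1 - x/2) = 1/(2 - x) by
        rw [div_eq_div_iff (by linarith) hsne]; ring,
      show (1:ℝ) - 1/2 = 1/2 by norm_num,
      show x/2 / ((1:ℝ)/2) = x by field_simp] at h1'
  -- instance 2 : hf (x/2) (1-x)
  have h2' := hf (x/2) (1-x) (by linarith) (by linarith) (by linarith) (by linarith)
    (by linarith)
  rw [show (1 - x) / (1 - x/2) = (2 - 2*x)/(2 - x) by
        rw [div_eq_div_iff (by linarith) hsne]; ring,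
      show (1:ℝ) - (1 - x) = x by ring,
      show x/2/x = 1/2 by field_simp] at h2'
  -- instance 3 : hf x (1-x)
  have h3' := hf x (1-x) (by linarith) (by linarith) (by linarith) (by linarith)
    (by linarith)
  rw [show (1:ℝ) - (1 - x) = x by ring, div_self h1xne, div_self hxne] at h3'
  -- instance 4 : hf (1/(2-x)) ((1-x)/(2-x))
  have h4' := hf (1/(2-x)) ((1-x)/(2-x)) hunn
    (by rw [div_lt_one hs]; linarith) hvnn
    (by rw [div_lt_one hs]; linarith)
    (by rw [← add_div, div_le_one hs]; linarith)
  rw [show (1:ℝ) - 1/(2-x) = (1-x)/(2-x) by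
        rw [sub_eq_iff_eq_add, ← add_div, eq_comm, div_eq_one_iff_eq hsne]; ring,
      div_self hvne,
      show (1:ℝ) - (1-x)/(2-x) = 1/(2-x) by
        rw [sub_eq_iff_eq_add, ← add_div, eq_comm, div_eq_one_iff_eq hsne]; ring,
      div_self hune] at h4'
  -- instance 5 : hf (x/(2-x)) ((2-2x)/(2-x))
  have h5' := hf (x/(2-x)) ((2-2*x)/(2-x)) hwnn
    (by rw [div_lt_one hs]; linarith) hwpnn
    (by rw [div_lt_one hs]; linarith)
    (by rw [← add_div, div_le_one hs]; linarith)
  rw [show (1:ℝ) - x/(2-x) = (2-2*x)/(2-x) by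
        rw [sub_eq_iff_eq_add, ← add_div, eq_comm, div_eq_one_iff_eq hsne]; ring,
      div_self hwpne,
      show (1:ℝ) - (2-2*x)/(2-x) = x/(2-x) by
        rw [sub_eq_iff_eq_add, ← add_div, eq_comm, div_eq_one_iff_eq hsne]; ring,
      div_self hwne] at h5'
  -- instance 6 : hf (x/(2-x)) ((1-x)/(2-x))
  have h6' := hf (x/(2-x)) ((1-x)/(2-x)) hwnn
    (by rw [div_lt_one hs]; linarith) hvnn
    (by rw [div_lt_one hs]; linarith)
    (by rw [← add_div, div_le_one hs]; linarith)
  rw [show (1:ℝ) - x/(2-x) = (2-2*x)/(2-x) by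
        rw [sub_eq_iff_eq_add, ← add_div, eq_comm, div_eq_one_iff_eq hsne]; ring,
      show ((1:ℝ)-x)/(2-x) / ((2-2*x)/(2-x)) = 1/2 by
        rw [div_div_div_cancel_right₀ hsne, div_eq_div_iff h22pos.ne' (by norm_num)]; ring,
      show (1:ℝ) - (1-x)/(2-x) = 1/(2-x) by
        rw [sub_eq_iff_eq_add, ← add_div, eq_comm, div_eq_one_iff_eq hsne]; ring,
      show x/(2-x) / ((1:ℝ)/(2-x)) = x by
        rw [div_div_div_cancel_right₀ hsne, div_one]] at h6'
  -- rpow product identities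
  have pa : (1 - x/2) ^ α * (1/(2-x)) ^ α = ((1:ℝ)/2) ^ α := by
    rw [← Real.mul_rpow (by linarith) hunn]
    congr 1; field_simp
  have pb : (1 - x/2) ^ α * ((2-2*x)/(2-x)) ^ α = (1-x) ^ α := by
    rw [← Real.mul_rpow (by linarith) hwpnn]
    congr 1; field_simp
  have pc : (1 - x/2) ^ α * ((1-x)/(2-x)) ^ α = (1-x) ^ α * ((1:ℝ)/2) ^ α := by
    rw [← Real.mul_rpow (by linarith) hvnn,
        ← Real.mul_rpow (by linarith) (by norm_num)]
    congr 1; field_simp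
  have pd : (1 - x/2) ^ α * (x/(2-x)) ^ α = x ^ α * ((1:ℝ)/2) ^ α := by
    rw [← Real.mul_rpow (by linarith) hwnn,
        ← Real.mul_rpow (by linarith) (by norm_num)]
    congr 1; field_simp
  have pe : (2:ℝ) ^ (1 - α) = 2 * ((1:ℝ)/2) ^ α := by
    rw [show (1:ℝ) - α = 1 + (-α) by ring, Real.rpow_add two_pos, Real.rpow_one,
        Real.rpow_neg (by norm_num : (0:ℝ) ≤ 2),
        show ((1:ℝ)/2) = 2⁻¹ by norm_num,
        Real.inv_rpow (by norm_num : (0:ℝ) ≤ 2)]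
  -- the key algebraic identity
  have key : κ * (f x - f 1 * x ^ α)
      - (x ^ α + (1 - x) ^ α - 1) * (f (1/2) - f 1 * ((1:ℝ)/2) ^ α)
      = -(f (x/2) + (1 - x/2) ^ α * f (1/(2-x)) - f (1/2) - ((1:ℝ)/2) ^ α * f x)
        + (f (x/2) + (1 - x/2) ^ α * f ((2-2*x)/(2-x)) - f (1-x) - x ^ α * f (1/2))
        - (f x + (1-x) ^ α * f 1 - f (1-x) - x ^ α * f 1)
        + (1 - x/2) ^ α *
          ((f (1/(2-x)) + ((1-x)/(2-x)) ^ α * f 1 - f ((1-x)/(2-x)) - (1/(2-x)) ^ α * f 1)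
          + (f (x/(2-x)) + ((2-2*x)/(2-x)) ^ α * f 1 - f ((2-2*x)/(2-x)) - (x/(2-x)) ^ α * f 1)
          - (f (x/(2-x)) + ((2-2*x)/(2-x)) ^ α * f (1/2) - f ((1-x)/(2-x)) - (1/(2-x)) ^ α * f x)) := by
    simp only [hκdef]
    linear_combination (f x - f 1 * x ^ α) * pe - (f x - f 1) * pa
      - (f 1 - f (1/2)) * pb - f 1 * pc + f 1 * pd
  -- triangle inequality
  have hK0 : (0:ℝ) ≤ (1 - x/2) ^ α := Real.rpow_nonneg (by linarith) _
  have hK1 : (1 - x/2) ^ α ≤ 1 := Real.rpow_le_one (by linarith) (by linarith) hα.le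
  have key6 : |κ * (f x - f 1 * x ^ α)
      - (x ^ α + (1 - x) ^ α - 1) * (f (1/2) - f 1 * ((1:ℝ)/2) ^ α)| ≤ 6 * ε := by
    rw [key]
    obtain ⟨a1, b1⟩ := abs_le.mp h1'
    obtain ⟨a2, b2⟩ := abs_le.mp h2'
    obtain ⟨a3, b3⟩ := abs_le.mp h3'
    obtain ⟨a4, b4⟩ := abs_le.mp h4'
    obtain ⟨a5, b5⟩ := abs_le.mp h5'
    obtain ⟨a6, b6⟩ := abs_le.mp h6'
    set A4 := f (1/(2-x)) + ((1-x)/(2-x)) ^ α * f 1 - f ((1-x)/(2-x)) - (1/(2-x)) ^ α * f 1 with hA4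
    set A5 := f (x/(2-x)) + ((2-2*x)/(2-x)) ^ α * f 1 - f ((2-2*x)/(2-x)) - (x/(2-x)) ^ α * f 1 with hA5
    set A6 := f (x/(2-x)) + ((2-2*x)/(2-x)) ^ α * f (1/2) - f ((1-x)/(2-x)) - (1/(2-x)) ^ α * f x with hA6
    have hT : |(1 - x/2) ^ α * (A4 + A5 - A6)| ≤ 3 * ε := by
      rw [abs_mul, abs_of_nonneg hK0]
      have hin : |A4 + A5 - A6| ≤ 3 * ε := by
        rw [abs_le]; constructor <;> linarith
      calc (1 - x/2) ^ α * |A4 + A5 - A6| ≤ 1 * (3 * ε) :=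
            mul_le_mul hK1 hin (abs_nonneg _) zero_le_one
        _ = 3 * ε := by ring
    obtain ⟨aT, bT⟩ := abs_le.mp hT
    rw [abs_le]; constructor <;> linarith
  -- conclude
  have hre : f x - ((f 1 + (f (1/2) - f 1 * (1/2 : ℝ) ^ α) / κ) * x ^ α +
      (f (1/2) - f 1 * (1/2 : ℝ) ^ α) / κ * ((1 - x) ^ α - 1))
      = (κ * (f x - f 1 * x ^ α)
        - (x ^ α + (1 - x) ^ α - 1) * (f (1/2) - f 1 * ((1:ℝ)/2) ^ α)) / κ := by
    field_simp
    ring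
  rw [hre, abs_div]
  rw [show 7 * ε * |κ|⁻¹ = 7 * ε / |κ| from (div_eq_mul_inv _ _).symm]
  gcongr
  linarith [key6]
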